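/- The phylogeny graph of a doubly partial order is an interval graph. That is, if D is a digraph whose vertex set is a finite set V of points in ℝ² and whose arcs are exactly the pairs (x,v) with v ≺ x (where v ≺ x means v₁ < x₁ and v₂ < x₂), then there is an assignment J of closed real intervals to the vertices of the phylogeny graph of D such that two distinct vertices u,w are adjacent if and only if J(u) ∩ J(w) ≠ ∅. -/

import Mathlib

/-- `prec x y` means `x₁ < y₁` and `x₂ < y₂`, written `x ≺ y`. -/
def prec (x y : ℝ × ℝ) : Prop := x.1 < y.1 ∧ x.2 < y.2

/-- The phylogeny graph of the doubly partial order on a finite set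
`V ⊆ ℝ²` (arcs `(x,v)` exactly when `v ≺ x`): distinct `u`, `v` are adjacent
iff there is an arc between them or they have a common prey in `V`. -/
def phylogenyGraph (V : Finset (ℝ × ℝ)) : SimpleGraph {p : ℝ × ℝ // p ∈ V} where
  Adj u v := u ≠ v ∧
    (prec u.1 v.1 ∨ prec v.1 u.1 ∨ ∃ z ∈ V, prec z u.1 ∧ prec z v.1)
  symm := by
    constructor
    intro u v h
    exact ⟨Ne.symm h.1, by tauto⟩
  loopless := by
    constructor
    intro u h
    exact h.1 rfl

private lemma key_interval (V : Finset (ℝ × ℝ)) (x y : {p : ℝ × ℝ // p ∈ V} → ℝ)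
    (hx : Function.Injective x) (hy : Function.Injective y)
    (hprec : ∀ u v : {p : ℝ × ℝ // p ∈ V}, prec u.1 v.1 ↔ (x u < x v ∧ y u < y v)) :
    ∃ J : {p : ℝ × ℝ // p ∈ V} → Set ℝ,
      (∀ v, ∃ a b : ℝ, a ≤ b ∧ J v = Set.Icc a b) ∧
      (∀ u w, u ≠ w → ((phylogenyGraph V).Adj u w ↔ (J u ∩ J w).Nonempty)) := by
  classical
  let b : {p : ℝ × ℝ // p ∈ V} → ℕ :=
    fun v => (Finset.univ.filter (fun z => y z ≤ y v)).card
  have hb_mono : ∀ z v, y z ≤ y v → b z ≤ b v := by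
    intro z v h
    apply Finset.card_le_card
    intro w hw
    simp only [Finset.mem_filter] at *
    exact ⟨hw.1, le_trans hw.2 h⟩
  have hb_lt : ∀ z v, y z < y v → b z < b v := by
    intro z v h
    apply Finset.card_lt_card
    constructor
    · intro w hw
      simp only [Finset.mem_filter] at *
      exact ⟨hw.1, le_trans hw.2 h.le⟩
    · intro hsub
      have := hsub (Finset.mem_filter.mpr ⟨Finset.mem_univ v, le_refl _⟩)
      simp only [Finset.mem_filter] at this
      exact absurd this.2 (not_le.mpr h)
  have hb_le : ∀ z v, b z ≤ b v ↔ y z ≤ y v := by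
    intro z v
    constructor
    · intro h
      by_contra hc
      exact absurd h (not_le.mpr (hb_lt v z (not_le.mp hc)))
    · exact hb_mono z v
  have hTne : ∀ u : {p : ℝ × ℝ // p ∈ V},
      ((Finset.univ.filter (fun z => x z ≤ x u)).image b).Nonempty := by
    intro u
    exact ⟨b u, Finset.mem_image.mpr ⟨u,
      Finset.mem_filter.mpr ⟨Finset.mem_univ u, le_refl _⟩, rfl⟩⟩
  let T : {p : ℝ × ℝ // p ∈ V} → ℕ :=
    fun u => ((Finset.univ.filter (fun z => x z ≤ x u)).image b).min' (hTne u)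
  have hT : ∀ u v, T u ≤ b v ↔ ∃ z, x z ≤ x u ∧ y z ≤ y v := by
    intro u v
    constructor
    · intro h
      have hmem := Finset.min'_mem _ (hTne u)
      rw [Finset.mem_image] at hmem
      obtain ⟨z, hz, hbz⟩ := hmem
      rw [Finset.mem_filter] at hz
      exact ⟨z, hz.2, (hb_le z v).mp (by rw [hbz]; exact h)⟩
    · rintro ⟨z, hzx, hzy⟩
      calc T u ≤ b z := Finset.min'_le _ _ (Finset.mem_image.mpr
            ⟨z, Finset.mem_filter.mpr ⟨Finset.mem_univ z, hzx⟩, rfl⟩)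
        _ ≤ b v := (hb_le z v).mpr hzy
  let a : {p : ℝ × ℝ // p ∈ V} → ℝ := fun u => 1/2 - (T u : ℝ)
  have hsum : ∀ u v, (-(b v : ℝ) ≤ a u ↔ T u ≤ b v) := by
    intro u v
    simp only [a]
    constructor
    · intro h
      have h2 : (T u : ℝ) < (b v : ℝ) + 1 := by linarith
      have h3 : T u < b v + 1 := by exact_mod_cast h2
      omega
    · intro h
      have : (T u : ℝ) ≤ (b v : ℝ) := Nat.cast_le.mpr h
      linarith
  have hself : ∀ v, T v ≤ b v := fun v => (hT v v).mpr ⟨v, le_refl _, le_refl _⟩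
  refine ⟨fun v => Set.Icc (-(b v : ℝ)) (a v), ?_, ?_⟩
  · intro v
    exact ⟨-(b v : ℝ), a v, (hsum v v).mpr (hself v), rfl⟩
  · intro u w huw
    rw [Set.Icc_inter_Icc, Set.nonempty_Icc, le_min_iff, max_le_iff, max_le_iff]
    have hxne : x u ≠ x w := fun h => huw (hx h)
    have hyne : y u ≠ y w := fun h => huw (hy h)
    constructor
    · rintro ⟨-, hadj⟩
      have h2 : T u ≤ b w ∧ T w ≤ b u := by
        rcases hadj with h | h | ⟨z, hz, h1, h2⟩
        · obtain ⟨hx1, hy1⟩ := (hprec u w).mp h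
          exact ⟨(hT u w).mpr ⟨u, le_refl _, hy1.le⟩, (hT w u).mpr ⟨u, hx1.le, le_refl _⟩⟩
        · obtain ⟨hx1, hy1⟩ := (hprec w u).mp h
          exact ⟨(hT u w).mpr ⟨w, hx1.le, le_refl _⟩, (hT w u).mpr ⟨w, le_refl _, hy1.le⟩⟩
        · obtain ⟨hzx1, hzy1⟩ := (hprec ⟨z, hz⟩ u).mp h1
          obtain ⟨hzx2, hzy2⟩ := (hprec ⟨z, hz⟩ w).mp h2
          exact ⟨(hT u w).mpr ⟨⟨z, hz⟩, hzx1.le, hzy2.le⟩,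
            (hT w u).mpr ⟨⟨z, hz⟩, hzx2.le, hzy1.le⟩⟩
      exact ⟨⟨(hsum u u).mpr (hself u), (hsum u w).mpr h2.1⟩,
        ⟨(hsum w u).mpr h2.2, (hsum w w).mpr (hself w)⟩⟩
    · rintro ⟨⟨-, h1⟩, ⟨h2, -⟩⟩
      obtain ⟨z1, hz1x, hz1y⟩ := (hT u w).mp ((hsum u w).mp h1)
      obtain ⟨z2, hz2x, hz2y⟩ := (hT w u).mp ((hsum w u).mp h2)
      refine ⟨huw, ?_⟩
      rcases lt_or_gt_of_ne hxne with hxlt | hxgt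
      · rcases lt_or_gt_of_ne hyne with hylt | hygt
        · exact Or.inl ((hprec u w).mpr ⟨hxlt, hylt⟩)
        · -- x u < x w, y w < y u : z1 is a common prey
          have hz1x' : x z1 < x u := by
            rcases lt_or_eq_of_le hz1x with h | h
            · exact h
            · have h4 := hz1y
              rw [hx h] at h4
              exact absurd h4 (not_le.mpr hygt)
          have hz1y' : y z1 < y w := by
            rcases lt_or_eq_of_le hz1y with h | h
            · exact h
            · have h4 := hz1x
              rw [hy h] at h4
              exact absurd h4 (not_le.mpr hxlt)
          exact Or.inr (Or.inr ⟨z1.1, z1.2,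
            (hprec z1 u).mpr ⟨hz1x', hz1y'.trans hygt⟩,
            (hprec z1 w).mpr ⟨hz1x'.trans hxlt, hz1y'⟩⟩)
      · rcases lt_or_gt_of_ne hyne with hylt | hygt
        · -- x w < x u, y u < y w : z2 is a common prey
          have hz2x' : x z2 < x w := by
            rcases lt_or_eq_of_le hz2x with h | h
            · exact h
            · have h4 := hz2y
              rw [hx h] at h4
              exact absurd h4 (not_le.mpr hylt)
          have hz2y' : y z2 < y u := by
            rcases lt_or_eq_of_le hz2y with h | h
            · exact h
            · have h4 := hz2x
              rw [hy h] at h4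
              exact absurd h4 (not_le.mpr hxgt)
          exact Or.inr (Or.inr ⟨z2.1, z2.2,
            (hprec z2 u).mpr ⟨hz2x'.trans hxgt, hz2y'⟩,
            (hprec z2 w).mpr ⟨hz2x', hz2y'.trans hylt⟩⟩)
        · exact Or.inr (Or.inl ((hprec w u).mpr ⟨hxgt, hygt⟩))

/-- The phylogeny graph of a doubly partial order is an interval graph. -/
theorem phylogenyGraph_isIntervalGraph (V : Finset (ℝ × ℝ)) :
    ∃ J : {p : ℝ × ℝ // p ∈ V} → Set ℝ,
      (∀ v, ∃ a b : ℝ, a ≤ b ∧ J v = Set.Icc a b) ∧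
      (∀ u w, u ≠ w → ((phylogenyGraph V).Adj u w ↔ (J u ∩ J w).Nonempty)) := by
  obtain ⟨ε, hε0, hC⟩ : ∃ ε : ℝ, 0 < ε ∧ ∀ u ∈ V, ∀ v ∈ V,
      (u.1 < v.1 → u.1 - ε * u.2 < v.1 - ε * v.2) ∧
      (u.2 < v.2 → u.2 - ε * u.1 < v.2 - ε * v.1) := by
    have hev : ∀ᶠ ε in nhdsWithin (0:ℝ) (Set.Ioi 0), ∀ u ∈ V, ∀ v ∈ V,
        (u.1 < v.1 → u.1 - ε * u.2 < v.1 - ε * v.2) ∧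
        (u.2 < v.2 → u.2 - ε * u.1 < v.2 - ε * v.1) := by
      rw [Filter.eventually_all_finset]
      intro u _
      rw [Filter.eventually_all_finset]
      intro v _
      have key : ∀ p q r s : ℝ, p < q →
          ∀ᶠ ε in nhdsWithin (0:ℝ) (Set.Ioi 0), p - ε * r < q - ε * s := by
        intro p q r s hpq
        have hcont : Filter.Tendsto (fun ε : ℝ => (q - ε * s) - (p - ε * r))
            (nhdsWithin (0:ℝ) (Set.Ioi 0)) (nhds ((q - 0 * s) - (p - 0 * r))) := by
          apply Filter.Tendsto.mono_left _ nhdsWithin_le_nhds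
          exact (Continuous.tendsto (by continuity) 0)
        have hpos : (0:ℝ) < (q - 0 * s) - (p - 0 * r) := by nlinarith
        have := hcont.eventually (eventually_gt_nhds hpos)
        filter_upwards [this] with ε hε
        linarith
      apply Filter.Eventually.and
      · by_cases h : u.1 < v.1
        · filter_upwards [key u.1 v.1 u.2 v.2 h] with ε hε _; exact hε
        · exact Filter.Eventually.of_forall (fun _ h' => absurd h' h)
      · by_cases h : u.2 < v.2
        · filter_upwards [key u.2 v.2 u.1 v.1 h] with ε hε _; exact hε
        · exact Filter.Eventually.of_forall (fun _ h' => absurd h' h)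
    have hmem : ∀ᶠ ε in nhdsWithin (0:ℝ) (Set.Ioi 0), (0:ℝ) < ε := by
      filter_upwards [self_mem_nhdsWithin] with ε hε
      exact hε
    exact (hmem.and hev).exists
  set x : {p : ℝ × ℝ // p ∈ V} → ℝ := fun v => v.1.1 - ε * v.1.2 with hxdef
  set y : {p : ℝ × ℝ // p ∈ V} → ℝ := fun v => v.1.2 - ε * v.1.1 with hydef
  have hprec : ∀ u v : {p : ℝ × ℝ // p ∈ V}, prec u.1 v.1 ↔ (x u < x v ∧ y u < y v) := by
    intro u v
    constructor
    · rintro ⟨h1, h2⟩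
      exact ⟨(hC u.1 u.2 v.1 v.2).1 h1, (hC u.1 u.2 v.1 v.2).2 h2⟩
    · rintro ⟨h1, h2⟩
      simp only [hxdef, hydef] at h1 h2
      constructor
      · rcases lt_trichotomy u.1.1 v.1.1 with h | h | h
        · exact h
        · exfalso
          have hlt : v.1.2 < u.1.2 := by
            have : ε * v.1.2 < ε * u.1.2 := by linarith
            exact lt_of_mul_lt_mul_left this hε0.le
          have := (hC v.1 v.2 u.1 u.2).2 hlt
          linarith
        · exact absurd ((hC v.1 v.2 u.1 u.2).1 h) (by linarith)
      · rcases lt_trichotomy u.1.2 v.1.2 with h | h | h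
        · exact h
        · exfalso
          have hlt : v.1.1 < u.1.1 := by
            have : ε * v.1.1 < ε * u.1.1 := by linarith
            exact lt_of_mul_lt_mul_left this hε0.le
          have := (hC v.1 v.2 u.1 u.2).1 hlt
          linarith
        · exact absurd ((hC v.1 v.2 u.1 u.2).2 h) (by linarith)
  have hx : Function.Injective x := by
    intro u v h
    simp only [hxdef] at h
    rcases lt_trichotomy u.1.1 v.1.1 with h1 | h1 | h1
    · exact absurd ((hC u.1 u.2 v.1 v.2).1 h1) (by linarith)
    · have h2 : u.1.2 = v.1.2 := by
        have : ε * u.1.2 = ε * v.1.2 := by linarith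
        exact mul_left_cancel₀ hε0.ne' this
      exact Subtype.ext (Prod.ext h1 h2)
    · exact absurd ((hC v.1 v.2 u.1 u.2).1 h1) (by linarith)
  have hy : Function.Injective y := by
    intro u v h
    simp only [hydef] at h
    rcases lt_trichotomy u.1.2 v.1.2 with h1 | h1 | h1
    · exact absurd ((hC u.1 u.2 v.1 v.2).2 h1) (by linarith)
    · have h2 : u.1.1 = v.1.1 := by
        have : ε * u.1.1 = ε * v.1.1 := by linarith
        exact mul_left_cancel₀ hε0.ne' this
      exact Subtype.ext (Prod.ext h2 h1)
    · exact absurd ((hC v.1 v.2 u.1 u.2).2 h1) (by linarith)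
  exact key_interval V x y hx hy hprec
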